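/- The join-dependency relation on the join-irreducible elements of the permutohedron P(n) is a strict partial order (in particular it has no cycles), and consequently the lattice P(n) is a bounded homomorphic image of a free lattice. -/

import Mathlib

/-- `J_n = {(i,j) : 1 ≤ i < j ≤ n}`. -/
def JnS (n : ℕ) : Set (ℕ × ℕ) := {p | 1 ≤ p.1 ∧ p.1 < p.2 ∧ p.2 ≤ n}

/-- Transitivity of a set of pairs, viewed as a binary relation. -/
def TransSet (x : Set (ℕ × ℕ)) : Prop := ∀ i j k : ℕ, (i, j) ∈ x → (j, k) ∈ x → (i, k) ∈ x

/-- A subset of `J_n` is closed if it is transitive. -/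
def ClosedIn (n : ℕ) (x : Set (ℕ × ℕ)) : Prop := x ⊆ JnS n ∧ TransSet x

/-- A subset of `J_n` is clopen if both it and its complement in `J_n` are closed. -/
def ClopenIn (n : ℕ) (x : Set (ℕ × ℕ)) : Prop := ClosedIn n x ∧ ClosedIn n (JnS n \ x)

/-- The transitive closure of a set of pairs. -/
def clS (x : Set (ℕ × ℕ)) : Set (ℕ × ℕ) :=
  {p | Relation.TransGen (fun a b => (a, b) ∈ x) p.1 p.2}

/-- The interior: the largest open subset of `x`. -/
def intS (n : ℕ) (x : Set (ℕ × ℕ)) : Set (ℕ × ℕ) := JnS n \ clS (JnS n \ x)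

/-- Join-irreducible elements of the permutohedron `P(n)`. -/
def JoinIrrP (n : ℕ) (p : Set (ℕ × ℕ)) : Prop :=
  ClopenIn n p ∧ p ≠ ∅ ∧
    ∀ x y, ClopenIn n x → ClopenIn n y → p = clS (x ∪ y) → p = x ∨ p = y

/-- The join-dependency relation on `P(n)`: `p D q` iff `q` is join-irreducible, `p ≠ q`,
and there is a clopen `x` with `p ≤ q ∨ x` but `p ≰ q' ∨ x` for every `q' < q`
(equivalently `p ≰ q₊ ∨ x`, `q₊` the unique lower cover of `q`). -/
def DrelP (n : ℕ) (p q : Set (ℕ × ℕ)) : Prop :=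
  JoinIrrP n q ∧ p ≠ q ∧
    ∃ x, ClopenIn n x ∧ p ⊆ clS (q ∪ x) ∧
      ∀ q', ClopenIn n q' → q' ⊂ q → ¬ p ⊆ clS (q' ∪ x)

/-- `F` is a free lattice on the generating set `X ⊆ F`. -/
def IsFreeLatticeOn (F : Type) [Lattice F] (X : Set F) : Prop :=
  ∀ (M : Type) [Lattice M] (g : X → M), ∃! h : LatticeHom F M, ∀ v : X, h v = g v

/-- There is a surjective lattice homomorphism from `F` onto the permutohedron `P(n)`
that is bounded: each fiber has a least and a greatest element. -/
def IsBoundedSurjectionOntoPerm (n : ℕ) (F : Type) [Lattice F] : Prop :=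
  ∃ f : F → Set (ℕ × ℕ),
    (∀ z, ClopenIn n (f z)) ∧
    (∀ x, ClopenIn n x → ∃ z, f z = x) ∧
    (∀ z w, f (z ⊔ w) = clS (f z ∪ f w) ∧ f (z ⊓ w) = intS n (f z ∩ f w)) ∧
    (∀ x, ClopenIn n x →
      (∃ lb, IsLeast {z | f z = x} lb) ∧ ∃ ub, IsGreatest {z | f z = x} ub)



namespace FLP

inductive Term (I : Type) : Type
  | var : I → Term I
  | join : Term I → Term I → Term I
  | meet : Term I → Term I → Term I

variable {I : Type}

def eval {M : Type} [Lattice M] (v : I → M) : Term I → M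
  | .var i => v i
  | .join t s => eval v t ⊔ eval v s
  | .meet t s => eval v t ⊓ eval v s

def tle (t s : Term I) : Prop :=
  ∀ (M : Type) [Lattice M] (v : I → M), eval v t ≤ eval v s

theorem tle_refl (t : Term I) : tle t t := fun _ _ _ => le_refl _

theorem tle_trans {t s r : Term I} (h1 : tle t s) (h2 : tle s r) : tle t r :=
  fun M _ v => le_trans (h1 M v) (h2 M v)

instance termSetoid (I : Type) : Setoid (Term I) :=
  ⟨fun t s => tle t s ∧ tle s t,
   ⟨fun t => ⟨tle_refl t, tle_refl t⟩,
    fun h => ⟨h.2, h.1⟩,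
    fun h1 h2 => ⟨tle_trans h1.1 h2.1, tle_trans h2.2 h1.2⟩⟩⟩

def FL (I : Type) : Type := Quotient (termSetoid I)

def fmk (t : Term I) : FL I := Quotient.mk _ t

instance : LE (FL I) :=
  ⟨Quotient.lift₂ tle (by
    intro a b a' b' ha hb
    apply propext
    exact ⟨fun h => tle_trans ha.2 (tle_trans h hb.1),
           fun h => tle_trans ha.1 (tle_trans h hb.2)⟩)⟩

theorem fmk_le_fmk {t s : Term I} : fmk t ≤ fmk s ↔ tle t s := Iff.rfl

instance : Lattice (FL I) where
  le := (· ≤ ·)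
  le_refl := by rintro ⟨t⟩; exact tle_refl t
  le_trans := by rintro ⟨t⟩ ⟨s⟩ ⟨r⟩ h1 h2; exact tle_trans h1 h2
  le_antisymm := by rintro ⟨t⟩ ⟨s⟩ h1 h2; exact Quotient.sound ⟨h1, h2⟩
  sup := Quotient.map₂ Term.join (by
    rintro a a' ha b b' hb
    constructor
    · intro M _ v
      exact sup_le (le_trans (ha.1 M v) le_sup_left) (le_trans (hb.1 M v) le_sup_right)
    · intro M _ v
      exact sup_le (le_trans (ha.2 M v) le_sup_left) (le_trans (hb.2 M v) le_sup_right))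
  inf := Quotient.map₂ Term.meet (by
    rintro a a' ha b b' hb
    constructor
    · intro M _ v
      exact le_inf (le_trans inf_le_left (ha.1 M v)) (le_trans inf_le_right (hb.1 M v))
    · intro M _ v
      exact le_inf (le_trans inf_le_left (ha.2 M v)) (le_trans inf_le_right (hb.2 M v)))
  le_sup_left := by rintro ⟨t⟩ ⟨s⟩; exact fun M _ v => le_sup_left
  le_sup_right := by rintro ⟨t⟩ ⟨s⟩; exact fun M _ v => le_sup_right
  sup_le := by rintro ⟨t⟩ ⟨s⟩ ⟨r⟩ h1 h2; exact fun M _ v => sup_le (h1 M v) (h2 M v)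
  inf_le_left := by rintro ⟨t⟩ ⟨s⟩; exact fun M _ v => inf_le_left
  inf_le_right := by rintro ⟨t⟩ ⟨s⟩; exact fun M _ v => inf_le_right
  le_inf := by rintro ⟨t⟩ ⟨s⟩ ⟨r⟩ h1 h2; exact fun M _ v => le_inf (h1 M v) (h2 M v)

theorem fmk_join (t s : Term I) : fmk (Term.join t s) = fmk t ⊔ fmk s := rfl
theorem fmk_meet (t s : Term I) : fmk (Term.meet t s) = fmk t ⊓ fmk s := rfl

def gen (i : I) : FL I := fmk (Term.var i)

/-- Evaluation as a lattice hom. -/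
def evalHom {M : Type} [Lattice M] (v : I → M) : LatticeHom (FL I) M where
  toFun := Quotient.lift (eval v) (fun a b h => le_antisymm (h.1 M v) (h.2 M v))
  map_sup' := by rintro ⟨t⟩ ⟨s⟩; rfl
  map_inf' := by rintro ⟨t⟩ ⟨s⟩; rfl

theorem evalHom_gen {M : Type} [Lattice M] (v : I → M) (i : I) : evalHom v (gen i) = v i := rfl

theorem evalHom_fmk {M : Type} [Lattice M] (v : I → M) (t : Term I) :
    evalHom v (fmk t) = eval v t := rfl

theorem evalHom_mono {M : Type} [Lattice M] (v : I → M) {z w : FL I} (h : z ≤ w) :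
    evalHom v z ≤ evalHom v w := by
  induction z using Quotient.ind with
  | _ t =>
    induction w using Quotient.ind with
    | _ s => exact h M v

theorem isFree (I : Type) :
    ∀ (M : Type) [Lattice M] (g : (Set.range (gen (I := I))) → M),
      ∃! h : LatticeHom (FL I) M, ∀ v : (Set.range (gen (I := I))), h v = g v := by
  intro M _ g
  refine ⟨evalHom (fun i => g ⟨gen i, ⟨i, rfl⟩⟩), ?_, ?_⟩
  · rintro ⟨x, hx⟩
    obtain ⟨i, rfl⟩ := hx
    exact congrArg g rfl
  · intro h' hh'
    apply DFunLike.ext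
    intro z
    induction z using Quotient.ind with
    | _ t =>
      induction t with
      | var i => exact (hh' ⟨gen i, ⟨i, rfl⟩⟩).trans rfl
      | join t s iht ihs =>
        show h' (fmk (Term.join t s)) = evalHom _ (fmk (Term.join t s))
        rw [fmk_join, map_sup, map_sup]
        exact congrArg₂ (· ⊔ ·) iht ihs
      | meet t s iht ihs =>
        show h' (fmk (Term.meet t s)) = evalHom _ (fmk (Term.meet t s))
        rw [fmk_meet, map_inf, map_inf]
        exact congrArg₂ (· ⊓ ·) iht ihs

section Bounds
variable [Fintype I] [Nonempty I]

noncomputable instance : @OrderBot (FL I) Preorder.toLE where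
  bot := Finset.inf' Finset.univ Finset.univ_nonempty gen
  bot_le := by
    rintro ⟨t⟩
    show Finset.inf' Finset.univ Finset.univ_nonempty gen ≤ fmk t
    induction t with
    | var i => exact Finset.inf'_le gen (Finset.mem_univ i)
    | join t s iht ihs => rw [fmk_join]; exact le_trans iht le_sup_left
    | meet t s iht ihs => rw [fmk_meet]; exact le_inf iht ihs

noncomputable instance : @OrderTop (FL I) Preorder.toLE where
  top := Finset.sup' Finset.univ Finset.univ_nonempty gen
  le_top := by
    rintro ⟨t⟩
    show fmk t ≤ Finset.sup' Finset.univ Finset.univ_nonempty gen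
    induction t with
    | var i => exact Finset.le_sup' gen (Finset.mem_univ i)
    | join t s iht ihs => rw [fmk_join]; exact sup_le iht ihs
    | meet t s iht ihs => rw [fmk_meet]; exact le_trans inf_le_left iht

end Bounds

/-! Dualization -/

def dualT : Term I → Term I
  | .var i => .var i
  | .join t s => .meet (dualT t) (dualT s)
  | .meet t s => .join (dualT t) (dualT s)

theorem dualT_dualT (t : Term I) : dualT (dualT t) = t := by
  induction t with
  | var i => rfl
  | join t s iht ihs => simp [dualT, iht, ihs]
  | meet t s iht ihs => simp [dualT, iht, ihs]

theorem eval_dualT {M : Type} [Lattice M] (v : I → M) (t : Term I) :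
    eval (M := Mᵒᵈ) (fun i => OrderDual.toDual (v i)) t
      = OrderDual.toDual (eval v (dualT t)) := by
  induction t with
  | var i => rfl
  | join t s iht ihs => show _ ⊔ _ = _; rw [iht, ihs]; rfl
  | meet t s iht ihs => show _ ⊓ _ = _; rw [iht, ihs]; rfl

theorem tle_dualT {t s : Term I} (h : tle t s) : tle (dualT s) (dualT t) := by
  intro M _ v
  have := h (Mᵒᵈ) (fun i => OrderDual.toDual (v i))
  rw [eval_dualT, eval_dualT] at this
  exact this

def fdual : FL I → FL I :=
  Quotient.map dualT (fun a b h => ⟨tle_dualT h.2, tle_dualT h.1⟩)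

theorem fdual_fdual (z : FL I) : fdual (fdual z) = z := by
  induction z using Quotient.ind with
  | _ t => show fmk (dualT (dualT t)) = fmk t; rw [dualT_dualT]

theorem fdual_le_fdual {z w : FL I} (h : z ≤ w) : fdual w ≤ fdual z := by
  induction z using Quotient.ind with
  | _ t =>
    induction w using Quotient.ind with
    | _ s => exact tle_dualT h

theorem evalHom_fdual {M : Type} [Lattice M] (v : I → M) (z : FL I) :
    evalHom (M := Mᵒᵈ) (fun i => OrderDual.toDual (v i)) z
      = OrderDual.toDual (evalHom v (fdual z)) := by
  induction z using Quotient.ind with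
  | _ t => exact eval_dualT v t

end FLP

namespace ABS
open FLP
open scoped Classical

variable {L : Type} [Lattice L] [BoundedOrder L]

def Ji (a : L) : Prop := a ≠ ⊥ ∧ ∀ x y : L, a = x ⊔ y → a = x ∨ a = y

def Drel (p q : L) : Prop :=
  Ji q ∧ p ≠ q ∧ ∃ x, p ≤ q ⊔ x ∧ ∀ q' < q, ¬ p ≤ q' ⊔ x

/-- `q` is below `p` in the dependency order. -/
def rD (q p : L) : Prop := Ji q ∧ Ji p ∧ Drel p q

section Fin
variable [Fintype L]

noncomputable def jset (a : L) : Finset L := Finset.univ.filter (fun p => Ji p ∧ p ≤ a)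

theorem sup_jset (a : L) : (jset a).sup id = a := by
  induction a using (wellFounded_lt (α := L)).induction with
  | _ a IH =>
    apply le_antisymm
    · exact Finset.sup_le fun p hp => (Finset.mem_filter.1 hp).2.2
    · by_cases hji : Ji a
      · exact Finset.le_sup (f := id) (Finset.mem_filter.2 ⟨Finset.mem_univ a, hji, le_refl a⟩)
      by_cases hbot : a = ⊥
      · rw [hbot]; exact bot_le
      · rw [Ji, not_and] at hji
        have := hji hbot
        push_neg at this
        obtain ⟨x, y, hxy, hx, hy⟩ := this
        have hxa : x < a := lt_of_le_of_ne (hxy ▸ le_sup_left) (fun h => hx h.symm)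
        have hya : y < a := lt_of_le_of_ne (hxy ▸ le_sup_right) (fun h => hy h.symm)
        have mx : (jset x).sup id ≤ (jset a).sup id :=
          Finset.sup_mono (fun p hp => by
            rw [jset, Finset.mem_filter] at hp ⊢
            exact ⟨hp.1, hp.2.1, le_trans hp.2.2 hxa.le⟩)
        have my : (jset y).sup id ≤ (jset a).sup id :=
          Finset.sup_mono (fun p hp => by
            rw [jset, Finset.mem_filter] at hp ⊢
            exact ⟨hp.1, hp.2.1, le_trans hp.2.2 hya.le⟩)
        rw [IH x hxa] at mx
        rw [IH y hya] at my
        exact le_trans (le_of_eq hxy) (sup_le mx my)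

noncomputable def ht (a : L) : ℕ := (Finset.univ.filter (· ≤ a)).card

theorem ht_lt {a b : L} (h : a < b) : ht a < ht b := by
  apply Finset.card_lt_card
  constructor
  · intro c hc
    rw [Finset.mem_filter] at hc ⊢
    exact ⟨hc.1, le_trans hc.2 h.le⟩
  · intro hsub
    have := hsub (Finset.mem_filter.2 ⟨Finset.mem_univ b, le_refl b⟩)
    exact absurd (Finset.mem_filter.1 this).2 (not_le_of_gt h)

theorem ht_pos (a : L) : 1 ≤ ht a := by
  apply Finset.card_pos.2
  exact ⟨⊥, Finset.mem_filter.2 ⟨Finset.mem_univ _, bot_le⟩⟩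

noncomputable def wt (C : Finset L) : ℕ := C.sum (fun q => (Fintype.card L + 1) ^ ht q)

theorem wt_union_le (s t : Finset L) : wt (s ∪ t) ≤ wt s + wt t := by
  have h := Finset.sum_union_inter (s₁ := s) (s₂ := t) (f := fun q => (Fintype.card L + 1) ^ ht q)
  exact Nat.le.intro h

theorem wt_jset_lt {q' q : L} (h : q' < q) : wt (jset q') < (Fintype.card L + 1) ^ ht q := by
  have hle : wt (jset q') ≤ (jset q').card • (Fintype.card L + 1) ^ (ht q - 1) := by
    apply Finset.sum_le_card_nsmul
    intro x hx
    have hxq : x < q := lt_of_le_of_lt (Finset.mem_filter.1 hx).2.2 h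
    have : ht x ≤ ht q - 1 := by have := ht_lt hxq; omega
    exact Nat.pow_le_pow_right (Nat.succ_le_succ (Nat.zero_le _)) this
  calc wt (jset q') ≤ (jset q').card • (Fintype.card L + 1) ^ (ht q - 1) := hle
    _ < (Fintype.card L + 1) * (Fintype.card L + 1) ^ (ht q - 1) := by
        rw [smul_eq_mul]
        exact Nat.mul_lt_mul_of_lt_of_le (Nat.lt_succ_of_le (Finset.card_filter_le _ _))
          (le_refl _) (pow_pos (Nat.succ_pos _) _)
    _ = (Fintype.card L + 1) ^ (ht q - 1 + 1) := by rw [pow_succ]; ring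
    _ = (Fintype.card L + 1) ^ ht q := by have := ht_pos q; congr 1; omega

/-- Minimal join covers: every nontrivial join cover of a join-irreducible
refines to one consisting of join-irreducibles all `D`-related to `p`. -/
theorem exists_mincover {p b1 b2 : L} (hp : Ji p) (h : p ≤ b1 ⊔ b2)
    (h1 : ¬ p ≤ b1) (h2 : ¬ p ≤ b2) :
    ∃ C : Finset L, (∀ q ∈ C, Ji q ∧ (q ≤ b1 ∨ q ≤ b2) ∧ Drel p q) ∧ p ≤ C.sup id := by
  set S : Finset (Finset L) := Finset.univ.filter
    (fun C => (∀ q ∈ C, Ji q ∧ (q ≤ b1 ∨ q ≤ b2)) ∧ p ≤ C.sup id) with hS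
  have hSne : S.Nonempty := by
    refine ⟨Finset.univ.filter (fun q => Ji q ∧ (q ≤ b1 ∨ q ≤ b2)), ?_⟩
    rw [hS, Finset.mem_filter]
    refine ⟨Finset.mem_univ _, fun q hq => (Finset.mem_filter.1 hq).2, ?_⟩
    have hb1 : b1 ≤ (Finset.univ.filter (fun q => Ji q ∧ (q ≤ b1 ∨ q ≤ b2))).sup id := by
      refine le_trans (le_of_eq (sup_jset b1).symm) (Finset.sup_mono ?_)
      intro r hr
      rw [jset, Finset.mem_filter] at hr
      rw [Finset.mem_filter]
      exact ⟨hr.1, hr.2.1, Or.inl hr.2.2⟩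
    have hb2 : b2 ≤ (Finset.univ.filter (fun q => Ji q ∧ (q ≤ b1 ∨ q ≤ b2))).sup id := by
      refine le_trans (le_of_eq (sup_jset b2).symm) (Finset.sup_mono ?_)
      intro r hr
      rw [jset, Finset.mem_filter] at hr
      rw [Finset.mem_filter]
      exact ⟨hr.1, hr.2.1, Or.inr hr.2.2⟩
    exact le_trans h (sup_le hb1 hb2)
  obtain ⟨C, hCS, hCmin⟩ := Finset.exists_min_image S wt hSne
  rw [hS, Finset.mem_filter] at hCS
  obtain ⟨-, hCmem, hCsup⟩ := hCS
  have hD : ∀ q ∈ C, Drel p q := by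
    intro q hq
    have hJq := (hCmem q hq).1
    have hpq : p ≠ q := by
      intro he
      rcases (hCmem q hq).2 with h' | h'
      · exact h1 (le_trans (le_of_eq he) h')
      · exact h2 (le_trans (le_of_eq he) h')
    refine ⟨hJq, hpq, (C.erase q).sup id, ?_, ?_⟩
    · refine le_trans hCsup (Finset.sup_le fun r hr => ?_)
      by_cases hrq : r = q
      · rw [hrq]; exact le_sup_left
      · exact le_trans (Finset.le_sup (f := id) (Finset.mem_erase.2 ⟨hrq, hr⟩)) le_sup_right
    · intro q' hq' hple
      set C'' : Finset L := (C.erase q) ∪ jset q' with hC''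
      have hC''S : C'' ∈ S := by
        rw [hS, Finset.mem_filter]
        refine ⟨Finset.mem_univ _, ?_, ?_⟩
        · intro r hr
          rw [hC'', Finset.mem_union] at hr
          rcases hr with hr | hr
          · exact hCmem r (Finset.mem_of_mem_erase hr)
          · rw [jset, Finset.mem_filter] at hr
            refine ⟨hr.2.1, ?_⟩
            have hrq : r ≤ q := le_trans hr.2.2 hq'.le
            rcases (hCmem q hq).2 with h' | h'
            · exact Or.inl (le_trans hrq h')
            · exact Or.inr (le_trans hrq h')
        · have hx : (C.erase q).sup id ≤ C''.sup id :=
            Finset.sup_mono (by rw [hC'']; exact Finset.subset_union_left)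
          have hq'le : q' ≤ C''.sup id := by
            rw [← sup_jset q']
            exact le_trans (Finset.sup_mono (by
              intro r hr
              rw [hC'', Finset.mem_union]
              exact Or.inr hr)) (le_refl _)
          exact le_trans hple (sup_le hq'le hx)
      have hwt : wt C'' < wt C := by
        have h1' : wt C'' ≤ wt (C.erase q) + wt (jset q') := wt_union_le _ _
        have h2' : wt (jset q') < (Fintype.card L + 1) ^ ht q := wt_jset_lt hq'
        have h3' : wt (C.erase q) + (Fintype.card L + 1) ^ ht q = wt C := by
          rw [wt, wt]
          exact Finset.sum_erase_add _ _ hq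
        omega
      exact absurd (hCmin C'' hC''S) (not_le_of_gt hwt)
  exact ⟨C, fun q hq => ⟨(hCmem q hq).1, (hCmem q hq).2, hD q hq⟩, hCsup⟩

end Fin

section Beta

variable [Fintype L] {I : Type} [Fintype I] [Nonempty I]

noncomputable def covers (p : L) : Finset (Finset L) :=
  Finset.univ.filter (fun C => p ≤ C.sup id ∧ ∀ q ∈ C, Ji q ∧ Ji p ∧ Drel p q)

noncomputable def bji (hwf : WellFounded (rD (L := L))) (val : I → L) : L → FL I :=
  hwf.fix fun p rec =>
    (Finset.univ.filter (fun i => p ≤ val i)).inf gen ⊓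
      (covers p).attach.inf fun C => C.val.attach.sup fun q =>
        rec q.val (by
          have h := (Finset.mem_filter.1 C.2).2.2 q.val q.2
          exact ⟨h.1, h.2.1, h.2.2⟩)

theorem bji_eq (hwf : WellFounded (rD (L := L))) (val : I → L) (p : L) :
    bji hwf val p =
      (Finset.univ.filter (fun i => p ≤ val i)).inf gen ⊓
        (covers p).attach.inf (fun C => C.val.attach.sup fun q => bji hwf val q.val) := by
  rw [bji, WellFounded.fix_eq]

theorem bji_le_gen (hwf : WellFounded (rD (L := L))) (val : I → L) {p : L} {i : I}
    (h : p ≤ val i) : bji hwf val p ≤ gen i := by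
  rw [bji_eq]
  exact le_trans inf_le_left (Finset.inf_le (Finset.mem_filter.2 ⟨Finset.mem_univ _, h⟩))

theorem bji_le_cover (hwf : WellFounded (rD (L := L))) (val : I → L) {p : L} {C : Finset L}
    (hC : C ∈ covers p) : bji hwf val p ≤ C.sup (bji hwf val) := by
  rw [bji_eq]
  refine le_trans inf_le_right (le_trans (Finset.inf_le (Finset.mem_attach _ ⟨C, hC⟩)) ?_)
  rw [Finset.sup_attach]

theorem evalHom_bot (val : I → L) (hval : Function.Surjective val) :
    evalHom val (⊥ : FL I) = ⊥ := by
  obtain ⟨i, hi⟩ := hval ⊥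
  apply le_antisymm _ bot_le
  have : evalHom val (⊥ : FL I) ≤ evalHom val (gen i) := evalHom_mono val (by exact @bot_le (FL I) Preorder.toLE _ (gen i))
  rw [evalHom_gen, hi] at this
  exact this

theorem evalHom_top (val : I → L) (hval : Function.Surjective val) :
    evalHom val (⊤ : FL I) = ⊤ := by
  obtain ⟨i, hi⟩ := hval ⊤
  apply le_antisymm le_top
  have : evalHom val (gen i) ≤ evalHom val (⊤ : FL I) := evalHom_mono val (by exact @le_top (FL I) Preorder.toLE _ (gen i))
  rw [evalHom_gen, hi] at this
  exact this

theorem evalHom_finset_sup (val : I → L) (hval : Function.Surjective val)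
    {γ : Type*} (s : Finset γ) (f : γ → FL I) :
    evalHom val (s.sup f) = s.sup (fun c => evalHom val (f c)) := by
  induction s using Finset.cons_induction with
  | empty => simpa using evalHom_bot val hval
  | cons a s ha ih => rw [Finset.sup_cons, Finset.sup_cons, map_sup, ih]

theorem evalHom_finset_inf (val : I → L) (hval : Function.Surjective val)
    {γ : Type*} (s : Finset γ) (f : γ → FL I) :
    evalHom val (s.inf f) = s.inf (fun c => evalHom val (f c)) := by
  induction s using Finset.cons_induction with
  | empty => simpa using evalHom_top val hval
  | cons a s ha ih => rw [Finset.inf_cons, Finset.inf_cons, map_inf, ih]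

theorem evalHom_bji (hwf : WellFounded (rD (L := L))) (val : I → L)
    (hval : Function.Surjective val) (p : L) :
    evalHom val (bji hwf val p) = p := by
  induction p using hwf.induction with
  | _ p IH =>
    rw [bji_eq, map_inf]
    have h1 : evalHom val ((Finset.univ.filter (fun i => p ≤ val i)).inf gen) = p := by
      rw [evalHom_finset_inf val hval]
      apply le_antisymm
      · obtain ⟨i, hi⟩ := hval p
        refine le_trans (Finset.inf_le (Finset.mem_filter.2 ⟨Finset.mem_univ _, hi.ge⟩)) ?_
        rw [evalHom_gen, hi]
      · exact Finset.le_inf fun i hi => by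
          rw [evalHom_gen]; exact (Finset.mem_filter.1 hi).2
    have h2 : p ≤ evalHom val ((covers p).attach.inf
        (fun C => C.val.attach.sup fun q => bji hwf val q.val)) := by
      rw [evalHom_finset_inf val hval]
      apply Finset.le_inf
      rintro ⟨C, hC⟩ -
      rw [evalHom_finset_sup val hval]
      have hCC := Finset.mem_filter.1 hC
      refine le_trans hCC.2.1 (Finset.sup_le fun q hq => ?_)
      have hrD : rD q p := by
        have h := hCC.2.2 q hq
        exact ⟨h.1, h.2.1, h.2.2⟩
      have := IH q hrD
      exact le_trans (le_of_eq (this.symm))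
        (Finset.le_sup (f := fun q' : {x // x ∈ C} => evalHom val (bji hwf val q'.val))
          (Finset.mem_attach _ ⟨q, hq⟩))
    rw [h1]
    exact le_antisymm inf_le_left (le_inf (le_refl p) h2)

noncomputable def bta (hwf : WellFounded (rD (L := L))) (val : I → L) (a : L) : FL I :=
  (jset a).sup (bji hwf val)

theorem evalHom_bta (hwf : WellFounded (rD (L := L))) (val : I → L)
    (hval : Function.Surjective val) (a : L) :
    evalHom val (bta hwf val a) = a := by
  rw [bta, evalHom_finset_sup val hval]
  rw [show (jset a).sup (fun c => evalHom val (bji hwf val c)) = (jset a).sup id from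
    Finset.sup_congr rfl (fun p _ => evalHom_bji hwf val hval p)]
  exact sup_jset a

theorem bji_le_bta (hwf : WellFounded (rD (L := L))) (val : I → L) {p a : L}
    (hp : Ji p) (hpa : p ≤ a) : bji hwf val p ≤ bta hwf val a :=
  Finset.le_sup (Finset.mem_filter.2 ⟨Finset.mem_univ _, hp, hpa⟩)

theorem bta_le_main (hwf : WellFounded (rD (L := L))) (val : I → L)
    (hval : Function.Surjective val) :
    ∀ (t : Term I) (a : L), a ≤ eval val t → bta hwf val a ≤ fmk t := by
  intro t
  induction t with
  | var i =>
    intro a ha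
    apply Finset.sup_le
    intro p hp
    have hm := Finset.mem_filter.1 hp
    exact bji_le_gen hwf val (le_trans hm.2.2 ha)
  | join t s iht ihs =>
    intro a ha
    rw [fmk_join]
    apply Finset.sup_le
    intro p hp
    have hm := Finset.mem_filter.1 hp
    obtain ⟨hJp, hpa⟩ := hm.2
    have hpb : p ≤ eval val t ⊔ eval val s := le_trans hpa ha
    by_cases hb1 : p ≤ eval val t
    · exact le_trans (bji_le_bta hwf val hJp (le_refl p))
        (le_trans (iht p hb1) le_sup_left)
    by_cases hb2 : p ≤ eval val s
    · exact le_trans (bji_le_bta hwf val hJp (le_refl p))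
        (le_trans (ihs p hb2) le_sup_right)
    obtain ⟨C, hCmem, hCsup⟩ := exists_mincover hJp hpb hb1 hb2
    have hCcov : C ∈ covers p := by
      rw [covers, Finset.mem_filter]
      exact ⟨Finset.mem_univ _, hCsup, fun q hq => ⟨(hCmem q hq).1, hJp, (hCmem q hq).2.2⟩⟩
    refine le_trans (bji_le_cover hwf val hCcov) (Finset.sup_le fun q hq => ?_)
    rcases (hCmem q hq).2.1 with h' | h'
    · exact le_trans (bji_le_bta hwf val (hCmem q hq).1 (le_refl q))
        (le_trans (iht q h') le_sup_left)
    · exact le_trans (bji_le_bta hwf val (hCmem q hq).1 (le_refl q))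
        (le_trans (ihs q h') le_sup_right)
  | meet t s iht ihs =>
    intro a ha
    rw [fmk_meet]
    exact le_inf (iht a (le_trans ha inf_le_left)) (ihs a (le_trans ha inf_le_right))

theorem lower_bounded (hwf : WellFounded (rD (L := L))) (val : I → L)
    (hval : Function.Surjective val) (a : L) :
    IsLeast {z : FL I | evalHom val z = a} (bta hwf val a) := by
  constructor
  · exact evalHom_bta hwf val hval a
  · rintro z hz
    induction z using Quotient.ind with
    | _ t => exact bta_le_main hwf val hval t a (le_of_eq hz.symm)

/-- Well-foundedness of `rD` from transitivity of `Drel` among join-irreducibles. -/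
theorem rD_wf (htrans : ∀ p q r : L, Ji p → Ji q → Ji r → Drel p q → Drel q r → Drel p r) :
    WellFounded (rD (L := L)) := by
  have : IsTrans L rD := ⟨by
    rintro a b c ⟨hJa, hJb, hab⟩ ⟨_, hJc, hbc⟩
    exact ⟨hJa, hJc, htrans c b a hJc hJb hJa hbc hab⟩⟩
  have : IsIrrefl L rD := ⟨by rintro a ⟨-, -, -, hne, -⟩; exact hne rfl⟩
  exact Finite.wellFounded_of_trans_of_irrefl rD

end Beta

section Transport

variable {M : Type} [Lattice M] [BoundedOrder M]

theorem Ji_map (e : L ≃o M) (a : L) : Ji (e a) ↔ Ji a := by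
  constructor
  · rintro ⟨hne, hirr⟩
    refine ⟨fun h => hne (by rw [h, e.map_bot]), ?_⟩
    intro x y hxy
    have := hirr (e x) (e y) (by rw [← e.map_sup, ← hxy])
    rcases this with h | h
    · exact Or.inl (e.injective h)
    · exact Or.inr (e.injective h)
  · rintro ⟨hne, hirr⟩
    refine ⟨fun h => hne (e.injective (by rw [h, e.map_bot])), ?_⟩
    intro x y hxy
    have := hirr (e.symm x) (e.symm y) (e.injective (by
      rw [e.map_sup, e.apply_symm_apply, e.apply_symm_apply, hxy]))
    rcases this with h | h
    · exact Or.inl (by rw [h, e.apply_symm_apply])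
    · exact Or.inr (by rw [h, e.apply_symm_apply])

theorem Drel_map (e : L ≃o M) (p q : L) : Drel (e p) (e q) ↔ Drel p q := by
  constructor
  · rintro ⟨hJq, hne, x, hle, hmin⟩
    refine ⟨(Ji_map e q).1 hJq, fun h => hne (congrArg e h), e.symm x, ?_, ?_⟩
    · have : e p ≤ e (q ⊔ e.symm x) := by rw [e.map_sup, e.apply_symm_apply]; exact hle
      exact e.le_iff_le.1 this
    · intro q' hq' hc
      refine hmin (e q') (e.strictMono hq') ?_
      have h2 : e p ≤ e (q' ⊔ e.symm x) := e.le_iff_le.2 hc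
      rwa [e.map_sup, e.apply_symm_apply] at h2
  · rintro ⟨hJq, hne, x, hle, hmin⟩
    refine ⟨(Ji_map e q).2 hJq, fun h => hne (e.injective h), e x, ?_, ?_⟩
    · rw [← e.map_sup]; exact e.le_iff_le.2 hle
    · intro q' hq' hc
      apply hmin (e.symm q') (by
        have := e.symm.strictMono hq'
        rwa [e.symm_apply_apply] at this)
      have : e p ≤ e (e.symm q' ⊔ x) := by
        rw [e.map_sup, e.apply_symm_apply]; exact hc
      exact e.le_iff_le.1 this

end Transport

end ABS

namespace PERM

/-- The step relation of a set of pairs. -/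
def R (s : Set (ℕ × ℕ)) : ℕ → ℕ → Prop := fun a b => (a, b) ∈ s

theorem mem_clS {s : Set (ℕ × ℕ)} {a b : ℕ} :
    (a, b) ∈ clS s ↔ Relation.TransGen (R s) a b := Iff.rfl

theorem subset_clS (s : Set (ℕ × ℕ)) : s ⊆ clS s := by
  rintro ⟨a, b⟩ h
  exact Relation.TransGen.single h

theorem clS_mono {s t : Set (ℕ × ℕ)} (h : s ⊆ t) : clS s ⊆ clS t := by
  rintro ⟨a, b⟩ hab
  exact Relation.TransGen.mono (fun c d hcd => h hcd) _ _ hab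

theorem transSet_clS (s : Set (ℕ × ℕ)) : TransSet (clS s) := by
  intro i j k hij hjk
  exact Relation.TransGen.trans hij hjk

theorem clS_eq_self {s : Set (ℕ × ℕ)} (h : TransSet s) : clS s = s := by
  apply Set.Subset.antisymm _ (subset_clS s)
  rintro ⟨a, b⟩ hab
  rw [mem_clS] at hab
  induction hab with
  | single h' => exact h'
  | tail _ h' ih => exact h _ _ _ ih h'

theorem R_lt {n : ℕ} {s : Set (ℕ × ℕ)} (hs : s ⊆ JnS n) {a b : ℕ} (h : R s a b) : a < b :=
  (hs h).2.1

theorem transGen_lt {s : Set (ℕ × ℕ)} (hs : ∀ a b, R s a b → a < b) {a b : ℕ}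
    (h : Relation.TransGen (R s) a b) : a < b := by
  induction h with
  | single h' => exact hs _ _ h'
  | tail _ h' ih => exact lt_trans ih (hs _ _ h')

theorem clS_subset_JnS {n : ℕ} {s : Set (ℕ × ℕ)} (hs : s ⊆ JnS n) : clS s ⊆ JnS n := by
  rintro ⟨a, b⟩ hab
  rw [mem_clS] at hab
  induction hab with
  | single h' => exact hs h'
  | tail hac h' ih =>
    refine ⟨ih.1, ?_, (hs h').2.2⟩
    exact lt_trans ih.2.1 (hs h').2.1

/-- Chain interpolation: in a union of clopen sets, any chain passing over `b`
can be split at `b`. -/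
theorem transGen_interpolate {n : ℕ} {s : Set (ℕ × ℕ)}
    (hsJ : s ⊆ JnS n)
    (hs : ∀ d e b, (d, e) ∈ s → d < b → b < e → (d, b) ∈ s ∨ (b, e) ∈ s)
    {a b c : ℕ} (h : Relation.TransGen (R s) a c) (h1 : a < b) :
    b < c → (Relation.TransGen (R s) a b ∨ Relation.TransGen (R s) b c) := by
  induction h with
  | @single c' h' =>
    intro h2
    rcases hs _ _ b h' h1 h2 with h'' | h''
    · exact Or.inl (Relation.TransGen.single h'')
    · exact Or.inr (Relation.TransGen.single h'')
  | @tail d c' had h' ih =>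
    intro h2
    rcases lt_trichotomy b d with hbd | hbd | hbd
    · rcases ih hbd with h'' | h''
      · exact Or.inl h''
      · exact Or.inr (Relation.TransGen.tail h'' h')
    · subst hbd; exact Or.inl had
    · rcases hs _ _ b h' hbd h2 with h'' | h''
      · exact Or.inl (Relation.TransGen.tail had h'')
      · exact Or.inr (Relation.TransGen.single h'')

theorem union_interpolate {n : ℕ} {x y : Set (ℕ × ℕ)}
    (hx : ClopenIn n x) (hy : ClopenIn n y) :
    ∀ d e b, (d, e) ∈ x ∪ y → d < b → b < e → (d, b) ∈ x ∪ y ∨ (b, e) ∈ x ∪ y := by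
  intro d e b hde h1 h2
  rcases hde with hde | hde
  · have hJ := hx.1.1 hde
    have hdb : (d, b) ∈ JnS n := ⟨hJ.1, h1, le_of_lt (lt_of_lt_of_le h2 hJ.2.2)⟩
    have hbe : (b, e) ∈ JnS n := ⟨le_trans hJ.1 (le_of_lt h1), h2, hJ.2.2⟩
    by_cases hb : (d, b) ∈ x
    · exact Or.inl (Or.inl hb)
    by_cases hb' : (b, e) ∈ x
    · exact Or.inr (Or.inl hb')
    · exact absurd (hx.2.2 d b e ⟨hdb, hb⟩ ⟨hbe, hb'⟩).2 (by simp [hde])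
  · have hJ := hy.1.1 hde
    have hdb : (d, b) ∈ JnS n := ⟨hJ.1, h1, le_of_lt (lt_of_lt_of_le h2 hJ.2.2)⟩
    have hbe : (b, e) ∈ JnS n := ⟨le_trans hJ.1 (le_of_lt h1), h2, hJ.2.2⟩
    by_cases hb : (d, b) ∈ y
    · exact Or.inl (Or.inr hb)
    by_cases hb' : (b, e) ∈ y
    · exact Or.inr (Or.inr hb')
    · exact absurd (hy.2.2 d b e ⟨hdb, hb⟩ ⟨hbe, hb'⟩).2 (by simp [hde])

theorem clopen_join {n : ℕ} {x y : Set (ℕ × ℕ)} (hx : ClopenIn n x) (hy : ClopenIn n y) :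
    ClopenIn n (clS (x ∪ y)) := by
  have hJ : x ∪ y ⊆ JnS n := Set.union_subset hx.1.1 hy.1.1
  refine ⟨⟨clS_subset_JnS hJ, transSet_clS _⟩, ?_, ?_⟩
  · exact Set.diff_subset
  · intro i j k hij hjk
    refine ⟨⟨hij.1.1, lt_trans hij.1.2.1 hjk.1.2.1, hjk.1.2.2⟩, ?_⟩
    intro hik
    rw [mem_clS] at hik
    rcases transGen_interpolate hJ (union_interpolate hx hy) hik hij.1.2.1 hjk.1.2.1 with
      h | h
    · exact hij.2 h
    · exact hjk.2 h

theorem clopen_empty (n : ℕ) : ClopenIn n (∅ : Set (ℕ × ℕ)) := by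
  refine ⟨⟨Set.empty_subset _, fun i j k h => h.elim⟩, Set.diff_subset, ?_⟩
  intro i j k hij hjk
  exact ⟨⟨hij.1.1, lt_trans hij.1.2.1 hjk.1.2.1, hjk.1.2.2⟩, Set.notMem_empty _⟩

theorem clopen_JnS (n : ℕ) : ClopenIn n (JnS n) := by
  constructor
  · refine ⟨le_refl _, ?_⟩
    intro i j k hij hjk
    exact ⟨hij.1, lt_trans hij.2.1 hjk.2.1, hjk.2.2⟩
  · constructor
    · exact Set.diff_subset
    · intro i j k hij hjk
      exact absurd hij.1 hij.2

theorem clopen_compl {n : ℕ} {x : Set (ℕ × ℕ)} (hx : ClopenIn n x) :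
    ClopenIn n (JnS n \ x) := by
  refine ⟨hx.2, ?_, ?_⟩
  · exact Set.diff_subset
  · intro i j k hij hjk
    have hik : (i, k) ∈ JnS n := ⟨hij.1.1, lt_trans hij.1.2.1 hjk.1.2.1, hjk.1.2.2⟩
    refine ⟨hik, fun h => ?_⟩
    have hij' : (i, j) ∈ x := by
      by_contra hc
      exact hij.2 ⟨hij.1, hc⟩
    have hjk' : (j, k) ∈ x := by
      by_contra hc
      exact hjk.2 ⟨hjk.1, hc⟩
    exact h.2 (hx.1.2 i j k hij' hjk')

theorem diff_diff_self {n : ℕ} {x : Set (ℕ × ℕ)} (hx : x ⊆ JnS n) :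
    JnS n \ (JnS n \ x) = x := by
  ext p
  constructor
  · rintro ⟨hp, hnp⟩
    by_contra hc
    exact hnp ⟨hp, hc⟩
  · intro hp
    exact ⟨hx hp, fun h => h.2 hp⟩

theorem clopen_inter {n : ℕ} {x y : Set (ℕ × ℕ)} (hx : ClopenIn n x) (hy : ClopenIn n y) :
    ClopenIn n (intS n (x ∩ y)) := by
  have h1 : JnS n \ (x ∩ y) = (JnS n \ x) ∪ (JnS n \ y) := by
    ext p
    constructor
    · rintro ⟨hp, hnp⟩
      by_cases hpx : p ∈ x
      · exact Or.inr ⟨hp, fun h => hnp ⟨hpx, h⟩⟩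
      · exact Or.inl ⟨hp, hpx⟩
    · rintro (⟨hp, hnp⟩ | ⟨hp, hnp⟩)
      · exact ⟨hp, fun h => hnp h.1⟩
      · exact ⟨hp, fun h => hnp h.2⟩
  rw [intS, h1]
  exact clopen_compl (clopen_join (clopen_compl hx) (clopen_compl hy))

theorem clS_le_of_le {n : ℕ} {x y w : Set (ℕ × ℕ)} (hw : ClopenIn n w)
    (h1 : x ⊆ w) (h2 : y ⊆ w) : clS (x ∪ y) ⊆ w := by
  have : clS (x ∪ y) ⊆ clS w := clS_mono (Set.union_subset h1 h2)
  rwa [clS_eq_self hw.1.2] at this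

theorem intS_subset {n : ℕ} {x : Set (ℕ × ℕ)} (hx : x ⊆ JnS n) : intS n x ⊆ x := by
  rintro p ⟨hp, hnp⟩
  by_contra hc
  exact hnp (subset_clS _ ⟨hp, hc⟩)

theorem le_intS {n : ℕ} {x w : Set (ℕ × ℕ)} (hw : ClopenIn n w) (h : w ⊆ x) :
    w ⊆ intS n x := by
  intro p hp
  refine ⟨hw.1.1 hp, fun hc => ?_⟩
  have h2 : clS (JnS n \ x) ⊆ JnS n \ w := by
    have : JnS n \ x ⊆ JnS n \ w := fun z hz => ⟨hz.1, fun hzw => hz.2 (h hzw)⟩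
    have h3 := clS_mono this
    rwa [clS_eq_self hw.2.2] at h3
  exact (h2 hc).2 hp

/-- The permutohedron as a lattice. -/
abbrev Lc (n : ℕ) : Type := {x : Set (ℕ × ℕ) // ClopenIn n x}

namespace Lc

variable {n : ℕ}

instance : PartialOrder (Lc n) := PartialOrder.lift Subtype.val Subtype.val_injective

theorem le_def' {a b : Lc n} : a ≤ b ↔ a.val ⊆ b.val := Iff.rfl

instance : Lattice (Lc n) :=
  { (inferInstance : PartialOrder (Lc n)) with
    sup := fun a b => ⟨clS (a.val ∪ b.val), clopen_join a.2 b.2⟩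
    le_sup_left := fun a b =>
      le_def'.2 (Set.Subset.trans Set.subset_union_left (subset_clS _))
    le_sup_right := fun a b =>
      le_def'.2 (Set.Subset.trans Set.subset_union_right (subset_clS _))
    sup_le := fun a b c h1 h2 => le_def'.2 (clS_le_of_le c.2 (le_def'.1 h1) (le_def'.1 h2))
    inf := fun a b => ⟨intS n (a.val ∩ b.val), clopen_inter a.2 b.2⟩
    inf_le_left := fun a b => le_def'.2 (Set.Subset.trans
      (intS_subset (fun p hp => a.2.1.1 hp.1)) Set.inter_subset_left)
    inf_le_right := fun a b => le_def'.2 (Set.Subset.trans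
      (intS_subset (fun p hp => a.2.1.1 hp.1)) Set.inter_subset_right)
    le_inf := fun a b c h1 h2 =>
      le_def'.2 (le_intS a.2 (Set.subset_inter (le_def'.1 h1) (le_def'.1 h2))) }

instance : BoundedOrder (Lc n) where
  top := ⟨JnS n, clopen_JnS n⟩
  le_top a := le_def'.2 a.2.1.1
  bot := ⟨∅, clopen_empty n⟩
  bot_le a := le_def'.2 (Set.empty_subset _)

theorem le_def {a b : Lc n} : a ≤ b ↔ a.val ⊆ b.val := Iff.rfl
theorem sup_val (a b : Lc n) : (a ⊔ b).val = clS (a.val ∪ b.val) := rfl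
theorem inf_val (a b : Lc n) : (a ⊓ b).val = intS n (a.val ∩ b.val) := rfl
theorem bot_val : (⊥ : Lc n).val = ∅ := rfl
theorem top_val : (⊤ : Lc n).val = JnS n := rfl

theorem finite_Lc (n : ℕ) : Finite (Lc n) := by
  have hJ : (JnS n).Finite := by
    apply Set.Finite.subset (Set.finite_Icc (1, 1) (n, n))
    rintro ⟨i, j⟩ ⟨h1, h2, h3⟩
    constructor
    · exact ⟨h1, le_trans h1 (le_of_lt h2)⟩
    · exact ⟨le_trans (le_of_lt h2) h3, h3⟩
  have : {x : Set (ℕ × ℕ) | ClopenIn n x}.Finite := by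
    apply Set.Finite.subset hJ.finite_subsets
    intro x hx
    exact hx.1.1
  exact this.to_subtype

instance : Finite (Lc n) := finite_Lc n

end Lc

/-! ### Canonical join-irreducibles -/

def Pc (u v : ℕ) (S : Set ℕ) : Set (ℕ × ℕ) :=
  {z | u ≤ z.1 ∧ z.1 < z.2 ∧ z.2 ≤ v ∧ (z.1 = u ∨ z.1 ∉ S) ∧ (z.2 = v ∨ z.2 ∈ S)}

def IsCanon (n u v : ℕ) (S : Set ℕ) : Prop := 1 ≤ u ∧ u < v ∧ v ≤ n ∧ S ⊆ Set.Ioo u v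

theorem mem_Pc {u v i j : ℕ} {S : Set ℕ} :
    (i, j) ∈ Pc u v S ↔ u ≤ i ∧ i < j ∧ j ≤ v ∧ (i = u ∨ i ∉ S) ∧ (j = v ∨ j ∈ S) :=
  Iff.rfl

variable {n : ℕ}

theorem Pc_subset_JnS {u v : ℕ} {S : Set ℕ} (hc : IsCanon n u v S) : Pc u v S ⊆ JnS n := by
  rintro ⟨i, j⟩ ⟨h1, h2, h3, -, -⟩
  exact ⟨le_trans hc.1 h1, h2, le_trans h3 hc.2.2.1⟩

theorem Pc_nocomp {u v i j k : ℕ} {S : Set ℕ} (hc : IsCanon n u v S)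
    (h1 : (i, j) ∈ Pc u v S) (h2 : (j, k) ∈ Pc u v S) : False := by
  obtain ⟨hi, hij, hj, -, hjS⟩ := h1
  obtain ⟨hj', hjk, hk, hjS', -⟩ := h2
  simp only at hi hij hj hj' hjk hk hjS hjS'
  rcases hjS with h | h
  · omega
  · rcases hjS' with h' | h'
    · have := hc.2.2.2 h
      rw [h'] at this
      exact absurd this.1 (lt_irrefl u)
    · exact h' h

theorem Pc_transSet_subset {u v : ℕ} {S : Set ℕ} (hc : IsCanon n u v S)
    {x : Set (ℕ × ℕ)} (hx : x ⊆ Pc u v S) : TransSet x := by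
  intro i j k hij hjk
  exact absurd (Pc_nocomp hc (hx hij) (hx hjk)) not_false

theorem Pc_clopen {u v : ℕ} {S : Set ℕ} (hc : IsCanon n u v S) : ClopenIn n (Pc u v S) := by
  refine ⟨⟨Pc_subset_JnS hc, Pc_transSet_subset hc (le_refl _)⟩, Set.diff_subset, ?_⟩
  intro i j k hij hjk
  refine ⟨⟨hij.1.1, lt_trans hij.1.2.1 hjk.1.2.1, hjk.1.2.2⟩, ?_⟩
  rintro ⟨hi, hik, hk, hiu, hkv⟩
  by_cases hjS : j ∈ S
  · exact hij.2 ⟨hi, hij.1.2.1, le_trans (le_of_lt hjk.1.2.1) hk, hiu, Or.inr hjS⟩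
  · exact hjk.2 ⟨le_trans hi (le_of_lt hij.1.2.1), hjk.1.2.1, hk, Or.inr hjS, hkv⟩

theorem mem_Pc_self {u v : ℕ} {S : Set ℕ} (hc : IsCanon n u v S) : (u, v) ∈ Pc u v S :=
  ⟨le_refl u, hc.2.1, le_refl v, Or.inl rfl, Or.inl rfl⟩

theorem Pc_bounds {u v i j : ℕ} {S : Set ℕ} (h : (i, j) ∈ Pc u v S) :
    u ≤ i ∧ i < j ∧ j ≤ v := ⟨h.1, h.2.1, h.2.2.1⟩

theorem Pc_inj {u v u' v' : ℕ} {S S' : Set ℕ} (h1 : IsCanon n u v S) (h2 : IsCanon n u' v' S')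
    (he : Pc u v S = Pc u' v' S') : u = u' ∧ v = v' ∧ S = S' := by
  have ha := mem_Pc_self h1
  have hb := mem_Pc_self h2
  rw [he] at ha
  rw [← he] at hb
  have hu : u = u' := le_antisymm (Pc_bounds hb).1 (Pc_bounds ha).1
  have hv : v = v' := le_antisymm (Pc_bounds ha).2.2 (Pc_bounds hb).2.2
  refine ⟨hu, hv, Set.Subset.antisymm ?_ ?_⟩
  · intro w hw
    have hwIoo := h1.2.2.2 hw
    have : (u, w) ∈ Pc u v S :=
      ⟨le_refl u, hwIoo.1, le_of_lt hwIoo.2, Or.inl rfl, Or.inr hw⟩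
    rw [he] at this
    rcases this.2.2.2.2 with h' | h'
    · simp only at h'
      exact absurd hwIoo.2 (by rw [h', ← hv]; exact lt_irrefl v)
    · exact h'
  · intro w hw
    have hwIoo := h2.2.2.2 hw
    have : (u', w) ∈ Pc u' v' S' :=
      ⟨le_refl u', hwIoo.1, le_of_lt hwIoo.2, Or.inl rfl, Or.inr hw⟩
    rw [← he] at this
    rcases this.2.2.2.2 with h' | h'
    · simp only at h'
      exact absurd hwIoo.2 (by rw [h', hv]; exact lt_irrefl v')
    · exact h'

/-- The canonical joinand of a clopen set at one of its elements. -/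
def SOf (a : Set (ℕ × ℕ)) (i j : ℕ) : Set ℕ := {w | i < w ∧ w < j ∧ (i, w) ∈ a}

theorem Pc_dense {a : Set (ℕ × ℕ)} (ha : ClopenIn n a) {i j : ℕ} (hij : (i, j) ∈ a) :
    IsCanon n i j (SOf a i j) ∧ Pc i j (SOf a i j) ⊆ a ∧ (i, j) ∈ Pc i j (SOf a i j) := by
  have hJ := ha.1.1 hij
  have hcanon : IsCanon n i j (SOf a i j) := ⟨hJ.1, hJ.2.1, hJ.2.2, fun w hw => ⟨hw.1, hw.2.1⟩⟩
  refine ⟨hcanon, ?_, mem_Pc_self hcanon⟩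
  rintro ⟨c, c'⟩ ⟨h1, h2, h3, h4, h5⟩
  have hintro : c ≠ i → (i, c) ∉ a := by
    intro hci hc
    rcases h4 with h' | h'
    · exact hci h'
    · exact h' ⟨lt_of_le_of_ne h1 (Ne.symm hci), lt_of_lt_of_le h2 h3, hc⟩
  rcases h5 with h' | h'
  · subst h'
    by_cases hci : c = i
    · subst hci; exact hij
    · -- use co-transitivity on (i,c),(c,j)
      have h6 : (i, c) ∈ JnS n := ⟨hJ.1, lt_of_le_of_ne h1 (Ne.symm hci), le_trans (le_of_lt h2) (le_trans h3 hJ.2.2)⟩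
      have h7 : (c, c') ∈ JnS n := ⟨le_trans hJ.1 h1, h2, le_trans h3 hJ.2.2⟩
      by_contra hcc
      exact (ha.2.2 i c c' ⟨h6, hintro hci⟩ ⟨h7, hcc⟩).2 hij
  · -- c' ∈ SOf
    by_cases hci : c = i
    · subst hci; exact h'.2.2
    · have h6 : (i, c) ∈ JnS n := ⟨hJ.1, lt_of_le_of_ne h1 (Ne.symm hci), le_trans (le_of_lt h2) (le_trans h3 hJ.2.2)⟩
      have h7 : (c, c') ∈ JnS n := ⟨le_trans hJ.1 h1, h2, le_trans h3 hJ.2.2⟩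
      by_contra hcc
      exact (ha.2.2 i c c' ⟨h6, hintro hci⟩ ⟨h7, hcc⟩).2 h'.2.2

/-- Join-irreducibles have canonical form. -/
theorem canon_of_ji {p : Set (ℕ × ℕ)} (hp : JoinIrrP n p) :
    ∃ u v S, IsCanon n u v S ∧ p = Pc u v S := by
  classical
  have hfin : p.Finite := by
    apply Set.Finite.subset (Set.finite_Icc (1, 1) (n, n))
    intro z hz
    have h := hp.1.1.1 hz
    exact ⟨⟨h.1, le_trans h.1 (le_of_lt h.2.1)⟩, ⟨le_trans (le_of_lt h.2.1) h.2.2, h.2.2⟩⟩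
  -- Q : joinand at each element
  let Q : ℕ × ℕ → Lc n := fun e =>
    if he : e ∈ p then (⟨Pc e.1 e.2 (SOf p e.1 e.2), Pc_clopen (Pc_dense hp.1 (by
      rcases e with ⟨i, j⟩; exact he)).1⟩ : Lc n) else ⊥
  have hQle : ∀ e, (Q e).val ⊆ p := by
    intro e
    by_cases he : e ∈ p
    · rcases e with ⟨i, j⟩
      simp only [Q, dif_pos he]
      exact (Pc_dense hp.1 he).2.1
    · simp only [Q, dif_neg he]
      exact Set.empty_subset _
  have hQmem : ∀ e ∈ p, e ∈ (Q e).val := by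
    intro e he
    rcases e with ⟨i, j⟩
    simp only [Q, dif_pos he]
    exact (Pc_dense hp.1 he).2.2
  -- the finite sup
  have key : ∀ F : Finset (ℕ × ℕ), ∀ pp : Lc n, pp.val = p →
      pp = F.sup Q → ∃ e ∈ F, pp = Q e := by
    intro F
    induction F using Finset.induction with
    | empty =>
      intro pp hpv hle
      exfalso
      apply hp.2.1
      rw [← hpv, hle]
      rfl
    | @insert a F ha ih =>
      intro pp hpv hle
      rw [Finset.sup_insert] at hle
      have hval : p = clS ((Q a).val ∪ (F.sup Q).val) := by
        rw [← hpv, hle]; rfl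
      rcases hp.2.2 (Q a).val (F.sup Q).val (Q a).2 (F.sup Q).2 hval with h' | h'
      · exact ⟨a, Finset.mem_insert_self a F, Subtype.ext (hpv.trans h')⟩
      · obtain ⟨e, he, hee⟩ := ih pp hpv (Subtype.ext (hpv.trans h'))
        exact ⟨e, Finset.mem_insert_of_mem he, hee⟩
  have htop : (⟨p, hp.1⟩ : Lc n) = hfin.toFinset.sup Q := by
    apply le_antisymm
    · intro z hz
      have hmem : Q z ≤ hfin.toFinset.sup Q :=
        Finset.le_sup (Set.Finite.mem_toFinset hfin |>.2 hz)
      exact hmem (hQmem z hz)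
    · apply Finset.sup_le
      intro e he
      exact hQle e
  obtain ⟨e, he, hee⟩ := key hfin.toFinset ⟨p, hp.1⟩ rfl htop
  have hep : e ∈ p := (Set.Finite.mem_toFinset hfin).1 he
  rcases e with ⟨i, j⟩
  refine ⟨i, j, SOf p i j, (Pc_dense hp.1 hep).1, ?_⟩
  have : (Q (i, j)).val = Pc i j (SOf p i j) := by
    simp only [Q, dif_pos hep]
  rw [← this]
  exact congrArg Subtype.val hee

/-! ### Chain surgery -/

theorem trans_avoid_top {s : Set (ℕ × ℕ)} {e : ℕ × ℕ}
    (hincr : ∀ a b, R (s ∪ {e}) a b → a < b) {a c : ℕ}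
    (h : Relation.TransGen (R (s ∪ {e})) a c) :
    c < e.2 → Relation.TransGen (R s) a c := by
  induction h with
  | @single c' h' =>
    intro hc
    rcases h' with h' | h'
    · exact Relation.TransGen.single h'
    · rw [Set.mem_singleton_iff] at h'
      exfalso
      have : c' = e.2 := congrArg Prod.snd h'
      omega
  | @tail d c' had h' ih =>
    intro hc
    rcases h' with h' | h'
    · exact Relation.TransGen.tail (ih (lt_trans (hincr _ _ (Or.inl h')) hc)) h'
    · rw [Set.mem_singleton_iff] at h'
      exfalso
      have : c' = e.2 := congrArg Prod.snd h'
      omega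

theorem trans_avoid_bot {s : Set (ℕ × ℕ)} {e : ℕ × ℕ}
    (hincr : ∀ a b, R (s ∪ {e}) a b → a < b) {c b : ℕ}
    (h : Relation.TransGen (R (s ∪ {e})) c b) (hc : e.1 < c) :
    Relation.TransGen (R s) c b := by
  induction h with
  | @single b' h' =>
    rcases h' with h' | h'
    · exact Relation.TransGen.single h'
    · rw [Set.mem_singleton_iff] at h'
      exfalso
      have : c = e.1 := congrArg Prod.fst h'
      omega
  | @tail d b' hcd h' ih =>
    rcases h' with h' | h'
    · exact Relation.TransGen.tail ih h'
    · rw [Set.mem_singleton_iff] at h'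
      exfalso
      have hde : d = e.1 := congrArg Prod.fst h'
      have : c < d := transGen_lt (fun a b hab => hincr a b (Or.inl hab)) ih
      omega

theorem split_essential {s : Set (ℕ × ℕ)} {e : ℕ × ℕ}
    (hincr : ∀ a b, R (s ∪ {e}) a b → a < b) {a b : ℕ}
    (h : Relation.TransGen (R (s ∪ {e})) a b) :
    ¬ Relation.TransGen (R s) a b →
      (a = e.1 ∨ Relation.TransGen (R s) a e.1) ∧
        (b = e.2 ∨ Relation.TransGen (R s) e.2 b) := by
  induction h with
  | @single b' h' =>
    intro hn
    rcases h' with h' | h'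
    · exact absurd (Relation.TransGen.single h') hn
    · rw [Set.mem_singleton_iff] at h'
      exact ⟨Or.inl (congrArg Prod.fst h'), Or.inl (congrArg Prod.snd h')⟩
  | @tail d b' had h' ih =>
    intro hn
    rcases h' with h' | h'
    · by_cases hcase : Relation.TransGen (R s) a d
      · exact absurd (Relation.TransGen.tail hcase h') hn
      · obtain ⟨hA, hB⟩ := ih hcase
        refine ⟨hA, ?_⟩
        rcases hB with hB | hB
        · exact Or.inr (Relation.TransGen.single (hB ▸ h'))
        · exact Or.inr (Relation.TransGen.tail hB h')
    · rw [Set.mem_singleton_iff] at h'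
      have hd : d = e.1 := congrArg Prod.fst h'
      have hb : b' = e.2 := congrArg Prod.snd h'
      refine ⟨?_, Or.inl hb⟩
      have he12 : e.1 < e.2 := hincr e.1 e.2 (Or.inr (by simp))
      have : Relation.TransGen (R s) a d := trans_avoid_top hincr had (by omega)
      exact Or.inr (hd ▸ this)

theorem transGen_invariant {r : ℕ → ℕ → Prop} {T : Set ℕ}
    (hT : ∀ c c', c ∈ T → r c c' → c' ∈ T) {a b : ℕ}
    (h : Relation.TransGen r a b) (ha : a ∈ T) : b ∈ T := by
  induction h with
  | single h' => exact hT _ _ ha h'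
  | tail _ h' ih => exact hT _ _ ih h'

/-! ### The lower cover of a canonical join-irreducible -/

theorem Pc_star_clopen {u' v' : ℕ} {S' : Set ℕ} (hc : IsCanon n u' v' S') :
    ClopenIn n (Pc u' v' S' \ {(u', v')}) := by
  refine ⟨⟨Set.Subset.trans Set.diff_subset (Pc_subset_JnS hc),
    Pc_transSet_subset hc Set.diff_subset⟩, Set.diff_subset, ?_⟩
  intro i j k hij hjk
  have hik : (i, k) ∈ JnS n := ⟨hij.1.1, lt_trans hij.1.2.1 hjk.1.2.1, hjk.1.2.2⟩
  refine ⟨hik, ?_⟩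
  rintro ⟨hikq, hikne⟩
  rw [Set.mem_singleton_iff] at hikne
  by_cases hijq : (i, j) ∈ Pc u' v' S'
  · have : (i, j) = (u', v') := by
      by_contra hne
      exact hij.2 ⟨hijq, hne⟩
    have hj : j = v' := congrArg Prod.snd this
    have hk : k ≤ v' := (Pc_bounds hikq).2.2
    have := hjk.1.2.1
    omega
  · by_cases hjkq : (j, k) ∈ Pc u' v' S'
    · have : (j, k) = (u', v') := by
        by_contra hne
        exact hjk.2 ⟨hjkq, hne⟩
      have hj : j = u' := congrArg Prod.fst this
      have hi : u' ≤ i := (Pc_bounds hikq).1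
      have := hij.1.2.1
      omega
    · exact ((Pc_clopen hc).2.2 i j k ⟨hij.1, hijq⟩ ⟨hjk.1, hjkq⟩).2 hikq

theorem clopen_ssubset_Pc {u' v' : ℕ} {S' : Set ℕ} (hc : IsCanon n u' v' S')
    {q' : Set (ℕ × ℕ)} (hq' : ClopenIn n q') (hss : q' ⊂ Pc u' v' S') :
    q' ⊆ Pc u' v' S' \ {(u', v')} := by
  intro z hz
  refine ⟨hss.1 hz, ?_⟩
  rw [Set.mem_singleton_iff]
  intro hze
  subst hze
  -- (u',v') ∈ q' : derive a contradiction
  obtain ⟨w, hwq, hwq'⟩ := Set.exists_of_ssubset hss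
  rcases w with ⟨i, j⟩
  obtain ⟨hi, hij, hj, hiu, hjv⟩ := hwq
  have hmemJ : ∀ c d : ℕ, u' ≤ c → c < d → d ≤ v' → (c, d) ∈ JnS n :=
    fun c d h1 h2 h3 => ⟨le_trans hc.1 h1, h2, le_trans h3 hc.2.2.1⟩
  have hiv'q' : (i, v') ∉ q' := by
    rcases hjv with h' | h'
    · rw [← h']; exact hwq'
    · -- j ∈ S' : (j, v') ∉ q ⊇ q', co-trans on (i,j),(j,v')
      have hjv'q : (j, v') ∉ Pc u' v' S' := by
        rintro ⟨-, -, -, hcond, -⟩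
        rcases hcond with h'' | h''
        · have := hc.2.2.2 h'
          simp only at h''
          rw [h''] at this
          exact absurd this.1 (lt_irrefl u')
        · exact h'' h'
      have hjltv' : j < v' := by
        have := hc.2.2.2 h'
        exact this.2
      intro hcontra
      have h1 := hq'.2.2 i j v' ⟨hmemJ i j hi hij (le_trans (le_of_lt hjltv') (le_refl v')), hwq'⟩
        ⟨hmemJ j v' (le_trans hi (le_of_lt hij)) hjltv' (le_refl v'), fun hh => hjv'q (hss.1 hh)⟩
      exact h1.2 hcontra
  -- now (u', i) ∉ q' (if i ≠ u') and conclude (u',v') ∉ q'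
  by_cases hiu' : i = u'
  · subst hiu'
    rcases hjv with h' | h'
    · subst h'
      exact hwq' hz
    · exact hiv'q' hz
  · have hui : u' < i := lt_of_le_of_ne hi (Ne.symm hiu')
    have huiq : (u', i) ∉ Pc u' v' S' := by
      rintro ⟨-, -, -, -, hcond⟩
      rcases hcond with h'' | h''
      · simp only at h''
        subst h''
        omega
      · have h4 : i ∈ S' := h''
        rcases hiu with h3 | h3
        · have h5 : i = u' := h3
          rw [h5] at h4
          exact absurd (hc.2.2.2 h4).1 (lt_irrefl u')
        · exact h3 h4
    have hivJ : (i, v') ∈ JnS n := hmemJ i v' hi (lt_of_lt_of_le hij hj) (le_refl v')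
    have huiJ : (u', i) ∈ JnS n := hmemJ u' i (le_refl u') hui (le_trans (le_of_lt (lt_of_lt_of_le hij hj)) (le_refl v'))
    have h1 := hq'.2.2 u' i v' ⟨huiJ, fun hh => huiq (hss.1 hh)⟩ ⟨hivJ, hiv'q'⟩
    exact h1.2 hz

/-! ### Forward direction of the D-characterization -/

theorem drel_fwd {p q : Set (ℕ × ℕ)} {u v u' v' : ℕ} {S S' : Set ℕ}
    (hcp : IsCanon n u v S) (hcq : IsCanon n u' v' S')
    (hpf : p = Pc u v S) (hqf : q = Pc u' v' S')
    (hD : DrelP n p q) :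
    u ≤ u' ∧ v' ≤ v ∧ (u, v) ≠ (u', v') ∧ S' = S ∩ Set.Ioo u' v' := by
  obtain ⟨hJq, hne, x, hxc, hsub, hmin⟩ := hD
  set e : ℕ × ℕ := (u', v') with he_def
  set qstar : Set (ℕ × ℕ) := Pc u' v' S' \ {(u', v')} with hqs_def
  set s : Set (ℕ × ℕ) := qstar ∪ x with hs_def
  have hqsc : ClopenIn n qstar := Pc_star_clopen hcq
  have heq : e ∈ q := by rw [hqf]; exact mem_Pc_self hcq
  have hqss : qstar ⊂ q := by
    rw [hqf]
    refine ⟨Set.diff_subset, fun hsub' => ?_⟩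
    exact (hsub' (mem_Pc_self hcq)).2 rfl
  have hnsub : ¬ p ⊆ clS (qstar ∪ x) := hmin qstar hqsc hqss
  obtain ⟨z, hzp, hzn⟩ := Set.not_subset.1 hnsub
  rcases z with ⟨a, b⟩
  have hqx : q ∪ x = s ∪ {e} := by
    rw [hs_def, hqs_def, hqf]
    ext z
    simp only [Set.mem_union, Set.mem_diff, Set.mem_singleton_iff]
    constructor
    · rintro (hz | hz)
      · by_cases hze : z = (u', v')
        · exact Or.inr hze
        · exact Or.inl (Or.inl ⟨hz, hze⟩)
      · exact Or.inl (Or.inr hz)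
    · rintro ((⟨hz, -⟩ | hz) | hz)
      · exact Or.inl hz
      · exact Or.inr hz
      · rw [hz]; exact Or.inl (mem_Pc_self hcq)
  have hsJ : s ∪ {e} ⊆ JnS n := by
    rw [← hqx]
    exact Set.union_subset (hqf ▸ Pc_subset_JnS hcq) hxc.1.1
  have hincr : ∀ a b, R (s ∪ {e}) a b → a < b := fun a b h => (hsJ h).2.1
  have hab_cl : Relation.TransGen (R (s ∪ {e})) a b := by
    have := hsub hzp
    rw [hqx] at this
    exact this
  have hzn' : ¬ Relation.TransGen (R s) a b := hzn
  obtain ⟨hA, hB⟩ := split_essential hincr hab_cl hzn'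
  have hzp' : (a, b) ∈ Pc u v S := hpf ▸ hzp
  obtain ⟨hua, hab, hbv, haC, hbC⟩ := hzp'
  have hsincr : ∀ a b, R s a b → a < b := fun a b h => hincr a b (Or.inl h)
  have hau' : a ≤ u' := by
    rcases hA with h | h
    · exact le_of_eq h
    · exact le_of_lt (transGen_lt hsincr h)
  have hv'b : v' ≤ b := by
    rcases hB with h | h
    · exact le_of_eq h.symm
    · exact le_of_lt (transGen_lt hsincr h)
  have huu' : u ≤ u' := le_trans hua hau'
  have hv'v : v' ≤ v := le_trans hv'b hbv
  -- trace equality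
  have hS'sub : S' ⊆ S ∩ Set.Ioo u' v' := by
    intro w hw
    have hwI := hcq.2.2.2 hw
    refine ⟨?_, hwI⟩
    by_contra hwS
    -- (u', w) ∈ qstar, (w, b) ∈ p, chain gives contradiction
    have h1 : (u', w) ∈ qstar := by
      refine ⟨⟨le_refl u', hwI.1, le_of_lt hwI.2, Or.inl rfl, Or.inr hw⟩, ?_⟩
      rw [Set.mem_singleton_iff]
      intro hcon
      have h6 : w = v' := congrArg Prod.snd hcon
      exact absurd hwI.2 (by rw [h6]; exact lt_irrefl v')
    have h2 : (w, b) ∈ p := by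
      rw [hpf]
      exact ⟨le_of_lt (lt_of_le_of_lt huu' hwI.1), lt_of_lt_of_le hwI.2 hv'b,
        hbv, Or.inr hwS, hbC⟩
    have h3 : Relation.TransGen (R (s ∪ {e})) w b := by
      have := hsub h2
      rw [hqx] at this
      exact this
    have h4 : Relation.TransGen (R s) w b :=
      trans_avoid_bot hincr h3 (by simp only [he_def]; exact hwI.1)
    have h5 : Relation.TransGen (R s) a b := by
      have hstep : R s u' w := Or.inl h1
      rcases hA with h | h
      · rw [h]; exact Relation.TransGen.head hstep h4
      · exact Relation.TransGen.trans (Relation.TransGen.tail h hstep) h4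
    exact hzn' h5
  have hSsub : S ∩ Set.Ioo u' v' ⊆ S' := by
    rintro w ⟨hwS, hwI⟩
    by_contra hwS'
    have h1 : (w, v') ∈ qstar := by
      refine ⟨⟨le_of_lt hwI.1, hwI.2, le_refl v', Or.inr hwS', Or.inl rfl⟩, ?_⟩
      rw [Set.mem_singleton_iff]
      intro hcon
      have h6 : w = u' := congrArg Prod.fst hcon
      exact absurd hwI.1 (by rw [h6]; exact lt_irrefl u')
    have h2 : (a, w) ∈ p := by
      rw [hpf]
      exact ⟨hua, lt_of_le_of_lt hau' hwI.1, le_of_lt (lt_of_lt_of_le hwI.2 hv'v),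
        haC, Or.inr hwS⟩
    have h3 : Relation.TransGen (R (s ∪ {e})) a w := by
      have := hsub h2
      rw [hqx] at this
      exact this
    have h4 : Relation.TransGen (R s) a w :=
      trans_avoid_top hincr h3 (by simp only [he_def]; exact hwI.2)
    have h5 : Relation.TransGen (R s) a b := by
      have hstep : R s w v' := Or.inl h1
      rcases hB with h | h
      · rw [h]
        exact Relation.TransGen.tail h4 hstep
      · exact Relation.TransGen.trans (Relation.TransGen.tail h4 hstep) h
    exact hzn' h5
  have hSeq : S' = S ∩ Set.Ioo u' v' := Set.Subset.antisymm hS'sub hSsub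
  refine ⟨huu', hv'v, ?_, hSeq⟩
  intro hcon
  have hu : u = u' := congrArg Prod.fst hcon
  have hv : v = v' := congrArg Prod.snd hcon
  apply hne
  have hS2 : S' = S := by
    rw [hSeq, ← hu, ← hv]
    exact Set.inter_eq_left.2 hcp.2.2.2
  rw [hpf, hqf, ← hu, ← hv, hS2]

/-! ### Backward direction of the D-characterization -/

theorem drel_bwd {p q : Set (ℕ × ℕ)} {u v u' v' : ℕ} {S S' : Set ℕ}
    (hcp : IsCanon n u v S) (hcq : IsCanon n u' v' S')
    (hpf : p = Pc u v S) (hqf : q = Pc u' v' S')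
    (hJq : JoinIrrP n q)
    (h1 : u ≤ u') (h2 : v' ≤ v) (h3 : (u, v) ≠ (u', v'))
    (h4 : S' = S ∩ Set.Ioo u' v') :
    DrelP n p q := by
  subst hpf
  subst hqf
  have hu1 := hcp.1
  have huv := hcp.2.1
  have hvn := hcp.2.2.1
  have hSI := hcp.2.2.2
  have hu'v' : u' < v' := hcq.2.1
  set x1 : Set (ℕ × ℕ) := {z | z ∈ Pc u v S ∧ ¬(z.1 ≤ u' ∧ v' ≤ z.2)} with hx1
  set x2 : Set (ℕ × ℕ) := {z | z.2 = u' ∧ (z.1, v) ∈ Pc u v S ∧ z.1 < u'} with hx2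
  set x3 : Set (ℕ × ℕ) := {z | z.1 = v' ∧ (u, z.2) ∈ Pc u v S ∧ v' < z.2} with hx3
  set X : Set (ℕ × ℕ) := x1 ∪ x2 ∪ x3 with hX
  have hpne : Pc u v S ≠ Pc u' v' S' := by
    intro he
    obtain ⟨he1, he2, -⟩ := Pc_inj hcp hcq he
    exact h3 (by rw [he1, he2])
  -- X is clopen
  have hXJ : X ⊆ JnS n := by
    rintro ⟨i, j⟩ ((hz | hz) | hz)
    · exact Pc_subset_JnS hcp hz.1
    · obtain ⟨hj', hiv, hiu'⟩ := hz
      simp only at hj' hiu'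
      have hb := Pc_bounds hiv
      refine ⟨le_trans hu1 hb.1, by omega, by omega⟩
    · obtain ⟨hi', huj, hv'j⟩ := hz
      simp only at hi' hv'j
      have hb := Pc_bounds huj
      refine ⟨by omega, by omega, by omega⟩
  have hXtrans : TransSet X := by
    intro i j k hij hjk
    rcases hij with (hij | hij) | hij
    · rcases hjk with (hjk | hjk) | hjk
      · exact absurd (Pc_nocomp hcp hij.1 hjk.1) not_false
      · -- x1 then x2 : impossible
        exfalso
        obtain ⟨hk', hjv, hju'⟩ := hjk
        simp only at hk' hju'
        obtain ⟨-, hij2, -, -, hjC⟩ := hij.1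
        obtain ⟨hju, -, -, hjC2, -⟩ := hjv
        simp only at hij2 hjC hju hjC2
        rcases hjC with h' | h'
        · omega
        · rcases hjC2 with h'' | h''
          · have := hSI h'
            rw [h''] at this
            exact absurd this.1 (lt_irrefl u)
          · exact h'' h'
      · -- x1 then x3
        obtain ⟨hj', huk, hv'k⟩ := hjk
        simp only at hj' hv'k
        obtain ⟨hijP, hijC⟩ := hij
        obtain ⟨hiu, hij2, hjv, hiC, -⟩ := hijP
        obtain ⟨-, huk2, hkv, -, hkC⟩ := huk
        simp only at hiu hij2 hjv hiC hijC
        refine Or.inl (Or.inl ⟨⟨hiu, by omega, hkv, hiC, hkC⟩, ?_⟩)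
        simp only
        intro hcon
        exact hijC ⟨hcon.1, by omega⟩
    · rcases hjk with (hjk | hjk) | hjk
      · -- x2 then x1
        obtain ⟨hj', hiv, hiu'⟩ := hij
        simp only at hj' hiu'
        obtain ⟨hjkP, hjkC⟩ := hjk
        rw [hj'] at hjkP hjkC
        obtain ⟨-, hu'k, hkv, -, hkC⟩ := hjkP
        obtain ⟨hiu, -, -, hiC, -⟩ := hiv
        simp only at hu'k hkv hkC hiu hiC hjkC
        have hkv' : k < v' := by
          by_contra hcon
          exact hjkC ⟨le_refl u', by omega⟩
        refine Or.inl (Or.inl ⟨⟨hiu, by omega, hkv, hiC, hkC⟩, ?_⟩)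
        simp only
        omega
      · -- x2 then x2 : impossible
        exfalso
        obtain ⟨hj', -, -⟩ := hij
        obtain ⟨-, -, hju'⟩ := hjk
        simp only at hj' hju'
        omega
      · -- x2 then x3 : impossible
        exfalso
        obtain ⟨hj', -, -⟩ := hij
        obtain ⟨hj'', -, -⟩ := hjk
        simp only at hj' hj''
        omega
    · rcases hjk with (hjk | hjk) | hjk
      · -- x3 then x1 : impossible
        exfalso
        obtain ⟨hi', huj, hv'j⟩ := hij
        simp only at hi' hv'j
        obtain ⟨hjkP, -⟩ := hjk
        obtain ⟨-, -, hjv, -, hjC⟩ := huj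
        obtain ⟨-, hjk2, hkv, hjC2, -⟩ := hjkP
        simp only at hjv hjC hjk2 hkv hjC2
        rcases hjC with h' | h'
        · omega
        · rcases hjC2 with h'' | h''
          · have := hSI h'
            rw [h''] at this
            exact absurd this.1 (lt_irrefl u)
          · exact h'' h'
      · -- x3 then x2 : impossible
        exfalso
        obtain ⟨hi', -, hv'j⟩ := hij
        obtain ⟨-, -, hju'⟩ := hjk
        simp only at hi' hv'j hju'
        omega
      · -- x3 then x3 : impossible
        exfalso
        obtain ⟨-, -, hv'j⟩ := hij
        obtain ⟨hj', -, -⟩ := hjk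
        simp only at hv'j hj'
        omega
  have hXclopen : ClopenIn n X := by
    refine ⟨⟨hXJ, hXtrans⟩, Set.diff_subset, ?_⟩
    intro i j k hij hjk
    have hikJ : (i, k) ∈ JnS n := ⟨hij.1.1, lt_trans hij.1.2.1 hjk.1.2.1, hjk.1.2.2⟩
    have hijlt : i < j := hij.1.2.1
    have hjklt : j < k := hjk.1.2.1
    refine ⟨hikJ, ?_⟩
    intro hik
    rcases hik with (hik | hik) | hik
    · -- x1
      obtain ⟨hikP, hikC⟩ := hik
      simp only at hikC
      by_cases hijP : (i, j) ∈ Pc u v S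
      · by_cases hcc : i ≤ u' ∧ v' ≤ j
        · exact hikC ⟨hcc.1, by omega⟩
        · exact hij.2 (Or.inl (Or.inl ⟨hijP, hcc⟩))
      · by_cases hjkP : (j, k) ∈ Pc u v S
        · by_cases hcc : j ≤ u' ∧ v' ≤ k
          · exact hikC ⟨by omega, hcc.2⟩
          · exact hjk.2 (Or.inl (Or.inl ⟨hjkP, hcc⟩))
        · exact ((Pc_clopen hcp).2.2 i j k ⟨hij.1, hijP⟩ ⟨hjk.1, hjkP⟩).2 hikP
    · -- x2
      obtain ⟨hk', hiv, hiu'⟩ := hik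
      simp only at hk' hiu'
      obtain ⟨hiu, -, -, hiC, -⟩ := hiv
      simp only at hiu hiC
      by_cases hjS : j ∈ S
      · have hjI := hSI hjS
        apply hij.2
        refine Or.inl (Or.inl ⟨⟨hiu, hijlt, le_of_lt hjI.2, hiC, Or.inr hjS⟩, ?_⟩)
        simp only
        omega
      · apply hjk.2
        refine Or.inl (Or.inr ?_)
        refine ⟨hk', ⟨by omega, by omega, le_refl v, Or.inr hjS, Or.inl rfl⟩, by omega⟩
    · -- x3
      obtain ⟨hi', huk, hv'k⟩ := hik
      simp only at hi' hv'k
      obtain ⟨-, -, hkv, -, hkC⟩ := huk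
      simp only at hkv hkC
      by_cases hjS : j ∈ S
      · have hjI := hSI hjS
        apply hij.2
        refine Or.inr ?_
        refine ⟨hi', ⟨le_refl u, hjI.1, le_of_lt hjI.2, Or.inl rfl, Or.inr hjS⟩, by omega⟩
      · apply hjk.2
        refine Or.inl (Or.inl ⟨⟨by omega, hjklt, hkv, Or.inr hjS, hkC⟩, ?_⟩)
        simp only
        omega
  -- main structure
  refine ⟨hJq, hpne, X, hXclopen, ?_, ?_⟩
  · -- p ⊆ clS (q ∪ X)
    rintro ⟨i, j⟩ hij
    obtain ⟨hiu, hijlt, hjv, hiC, hjC⟩ := hij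
    simp only at hiu hijlt hjv hiC hjC
    rw [mem_clS]
    by_cases hcc : i ≤ u' ∧ v' ≤ j
    · have hmid : Relation.TransGen (R (Pc u' v' S' ∪ X)) u' v' :=
        Relation.TransGen.single (Or.inl (mem_Pc_self hcq))
      have hfront : ∀ h : i < u', Relation.TransGen (R (Pc u' v' S' ∪ X)) i v' := by
        intro hilt
        refine Relation.TransGen.head (Or.inr (Or.inl (Or.inr ?_))) hmid
        exact ⟨rfl, ⟨hiu, by omega, le_refl v, hiC, Or.inl rfl⟩, hilt⟩
      have hmidfront : Relation.TransGen (R (Pc u' v' S' ∪ X)) i v' := by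
        rcases lt_or_eq_of_le hcc.1 with h' | h'
        · exact hfront h'
        · rw [h']; exact hmid
      rcases lt_or_eq_of_le hcc.2 with h' | h'
      · refine Relation.TransGen.tail hmidfront (Or.inr (Or.inr ?_))
        exact ⟨rfl, ⟨le_refl u, by omega, hjv, Or.inl rfl, hjC⟩, h'⟩
      · rw [← h']; exact hmidfront
    · exact Relation.TransGen.single (Or.inr (Or.inl (Or.inl ⟨⟨hiu, hijlt, hjv, hiC, hjC⟩, hcc⟩)))
  · -- minimality
    intro q' hq'c hq'ss hple
    have hq's : q' ⊆ Pc u' v' S' \ {(u', v')} := clopen_ssubset_Pc hcq hq'c hq'ss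
    set T : Set ℕ := ({u, u'} : Set ℕ) ∪ (S ∩ Set.Ioo u v') with hT_def
    have hT : ∀ c c', c ∈ T → R ((Pc u' v' S' \ {(u', v')}) ∪ X) c c' → c' ∈ T := by
      intro c c' hc hstep
      simp only [hT_def, Set.mem_union, Set.mem_insert_iff, Set.mem_singleton_iff,
        Set.mem_inter_iff, Set.mem_Ioo] at hc
      rcases hstep with ⟨hstepQ, hstepne⟩ | hstepX
      · -- step in qstar
        obtain ⟨hc1, hc2, hc3, hc4, hc5⟩ := hstepQ
        simp only at hc1 hc2 hc3 hc4 hc5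
        rw [Set.mem_singleton_iff] at hstepne
        have hcu' : c = u' := by
          rcases hc with (hc | hc) | hc
          · omega
          · exact hc
          · by_contra hne'
            have hcS' : c ∈ S' := by
              rw [h4]
              exact ⟨hc.1, by omega, by omega⟩
            rcases hc4 with h' | h'
            · exact hne' h'
            · exact h' hcS'
        have hc'v' : c' ≠ v' := by
          intro hcon
          exact hstepne (by rw [hcu', hcon])
        have hc'S' : c' ∈ S' := by
          rcases hc5 with h' | h'
          · exact absurd h' hc'v'
          · exact h'
        rw [h4] at hc'S'
        simp only [hT_def, Set.mem_union, Set.mem_insert_iff, Set.mem_singleton_iff,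
          Set.mem_inter_iff, Set.mem_Ioo]
        right
        exact ⟨hc'S'.1, by omega, by omega⟩
      · rcases hstepX with (hstep | hstep) | hstep
        · -- x1
          obtain ⟨hP, hC⟩ := hstep
          obtain ⟨hcu, hcc', hc'v, hcB, hc'A⟩ := hP
          simp only at hcu hcc' hc'v hcB hc'A hC
          have hcle : c ≤ u' := by
            rcases hc with (hc | hc) | hc
            · omega
            · omega
            · rcases hcB with h' | h'
              · omega
              · exact absurd hc.1 h'
          have hc'lt : c' < v' := by
            by_contra hcon
            exact hC ⟨hcle, by omega⟩
          have hc'S : c' ∈ S := by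
            rcases hc'A with h' | h'
            · omega
            · exact h'
          simp only [hT_def, Set.mem_union, Set.mem_insert_iff, Set.mem_singleton_iff,
            Set.mem_inter_iff, Set.mem_Ioo]
          right
          exact ⟨hc'S, by omega, hc'lt⟩
        · -- x2
          obtain ⟨hc'e, -, -⟩ := hstep
          simp only at hc'e
          simp only [hT_def, Set.mem_union, Set.mem_insert_iff, Set.mem_singleton_iff]
          left
          right
          exact hc'e
        · -- x3 : impossible source
          exfalso
          obtain ⟨hce, -, -⟩ := hstep
          simp only at hce
          rcases hc with (hc | hc) | hc
          · omega
          · omega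
          · rw [hce] at hc
            exact absurd hc.2.2 (lt_irrefl v')
    have huvT : (u, v) ∈ clS ((Pc u' v' S' \ {(u', v')}) ∪ X) := by
      have := hple (mem_Pc_self hcp)
      exact clS_mono (Set.union_subset_union_left X hq's) this
    rw [mem_clS] at huvT
    have hvT : v ∈ T := transGen_invariant hT huvT
      (Set.mem_union_left _ (Set.mem_insert u _))
    simp only [hT_def, Set.mem_union, Set.mem_insert_iff, Set.mem_singleton_iff,
      Set.mem_inter_iff, Set.mem_Ioo] at hvT
    rcases hvT with (hvT | hvT) | hvT
    · omega
    · omega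
    · omega

theorem drelP_trans {p q r : Set (ℕ × ℕ)}
    (hp : JoinIrrP n p) (hq : JoinIrrP n q) (hr : JoinIrrP n r)
    (h1 : DrelP n p q) (h2 : DrelP n q r) : DrelP n p r := by
  obtain ⟨u, v, S, hcp, hpf⟩ := canon_of_ji hp
  obtain ⟨u', v', S', hcq, hqf⟩ := canon_of_ji hq
  obtain ⟨u'', v'', S'', hcr, hrf⟩ := canon_of_ji hr
  obtain ⟨hA1, hA2, hA3, hA4⟩ := drel_fwd hcp hcq hpf hqf h1
  obtain ⟨hB1, hB2, hB3, hB4⟩ := drel_fwd hcq hcr hqf hrf h2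
  have hne : (u, v) ≠ (u'', v'') := by
    intro hcon
    have hcu : u = u'' := congrArg Prod.fst hcon
    have hcv : v = v'' := congrArg Prod.snd hcon
    apply hA3
    have : u = u' ∧ v = v' := by omega
    rw [Prod.mk.injEq]
    exact this
  have htrace : S'' = S ∩ Set.Ioo u'' v'' := by
    rw [hB4, hA4]
    ext w
    simp only [Set.mem_inter_iff, Set.mem_Ioo]
    constructor
    · rintro ⟨⟨hw1, -, -⟩, hw2⟩
      exact ⟨hw1, hw2⟩
    · rintro ⟨hw1, hw2, hw3⟩
      exact ⟨⟨hw1, by omega, by omega⟩, hw2, hw3⟩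
  exact drel_bwd hcp hcr hpf hrf hr (le_trans hA1 hB1) (le_trans hB2 hA2) hne htrace

end PERM



namespace GLUE
open PERM FLP

theorem Ji_iff {n : ℕ} {a : Lc n} : ABS.Ji a ↔ JoinIrrP n a.val := by
  constructor
  · rintro ⟨hne, hirr⟩
    refine ⟨a.2, fun h => hne (Subtype.ext h), ?_⟩
    intro x y hx hy hval
    rcases hirr ⟨x, hx⟩ ⟨y, hy⟩ (Subtype.ext hval) with h | h
    · exact Or.inl (congrArg Subtype.val h)
    · exact Or.inr (congrArg Subtype.val h)
  · rintro ⟨hc, hne, hirr⟩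
    refine ⟨fun h => hne (congrArg Subtype.val h), ?_⟩
    intro x y hxy
    rcases hirr x.val y.val x.2 y.2 (congrArg Subtype.val hxy) with h | h
    · exact Or.inl (Subtype.ext h)
    · exact Or.inr (Subtype.ext h)

theorem lt_iff {n : ℕ} {a b : Lc n} : a < b ↔ a.val ⊂ b.val := by
  rw [lt_iff_le_not_ge, Set.ssubset_def]
  exact Iff.rfl

theorem Drel_iff {n : ℕ} {a b : Lc n} : ABS.Drel a b ↔ DrelP n a.val b.val := by
  constructor
  · rintro ⟨hJ, hne, x, hle, hmin⟩
    refine ⟨Ji_iff.1 hJ, fun h => hne (Subtype.ext h), x.val, x.2, hle, ?_⟩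
    intro q' hq' hss hsub
    exact hmin ⟨q', hq'⟩ (lt_iff.2 hss) hsub
  · rintro ⟨hJ, hne, x, hx, hle, hmin⟩
    refine ⟨Ji_iff.2 hJ, fun h => hne (congrArg Subtype.val h), ⟨x, hx⟩, hle, ?_⟩
    intro q' hq' hsub
    exact hmin q'.val q'.2 (lt_iff.1 hq') hsub

def compl {n : ℕ} (a : Lc n) : Lc n := ⟨JnS n \ a.val, clopen_compl a.2⟩

theorem compl_compl {n : ℕ} (a : Lc n) : compl (compl a) = a :=
  Subtype.ext (diff_diff_self a.2.1.1)

theorem compl_le_compl {n : ℕ} {a b : Lc n} (h : a ≤ b) : compl b ≤ compl a := by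
  intro z hz
  exact ⟨hz.1, fun hza => hz.2 (h hza)⟩

theorem compl_le_iff {n : ℕ} {a b : Lc n} : compl a ≤ compl b ↔ b ≤ a := by
  constructor
  · intro h
    have := compl_le_compl h
    rwa [compl_compl, compl_compl] at this
  · exact compl_le_compl

def kappa (n : ℕ) : (Lc n)ᵒᵈ ≃o Lc n where
  toFun := fun a => compl (OrderDual.ofDual a)
  invFun := fun a => OrderDual.toDual (compl a)
  left_inv := fun a => by
    show OrderDual.toDual (compl (compl (OrderDual.ofDual a))) = a
    rw [compl_compl]
    rfl
  right_inv := fun a => by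
    show compl (compl a) = a
    rw [compl_compl]
  map_rel_iff' := by
    intro a b
    exact compl_le_iff

theorem habs_trans (n : ℕ) : ∀ p q r : Lc n, ABS.Ji p → ABS.Ji q → ABS.Ji r →
    ABS.Drel p q → ABS.Drel q r → ABS.Drel p r := by
  intro p q r hp hq hr h1 h2
  exact Drel_iff.2 (drelP_trans (Ji_iff.1 hp) (Ji_iff.1 hq) (Ji_iff.1 hr)
    (Drel_iff.1 h1) (Drel_iff.1 h2))

theorem habs_transD (n : ℕ) : ∀ p q r : (Lc n)ᵒᵈ, ABS.Ji p → ABS.Ji q → ABS.Ji r →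
    ABS.Drel p q → ABS.Drel q r → ABS.Drel p r := by
  intro p q r hp hq hr h1 h2
  have := habs_trans n (kappa n p) (kappa n q) (kappa n r)
    ((ABS.Ji_map (kappa n) p).2 hp) ((ABS.Ji_map (kappa n) q).2 hq)
    ((ABS.Ji_map (kappa n) r).2 hr)
    ((ABS.Drel_map (kappa n) p q).2 h1) ((ABS.Drel_map (kappa n) q r).2 h2)
  exact (ABS.Drel_map (kappa n) p r).1 this

end GLUE


/-- The join-dependency relation on the join-irreducibles of `P(n)` is a strict partial
order (irreflexive and transitive, hence without cycles); consequently the permutohedron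
`P(n)` is a bounded homomorphic image of a free lattice. -/
theorem stmt7 (n : ℕ) :
    ((∀ p, ¬ DrelP n p p) ∧
      (∀ p q r, JoinIrrP n p → JoinIrrP n q → JoinIrrP n r →
        DrelP n p q → DrelP n q r → DrelP n p r)) ∧
    ∃ (F : Type) (instF : Lattice F) (X : Set F),
      @IsFreeLatticeOn F instF X ∧ @IsBoundedSurjectionOntoPerm n F instF := by
  classical
  constructor
  · constructor
    · exact fun p h => h.2.1 rfl
    · exact fun p q r hp hq hr h1 h2 => PERM.drelP_trans hp hq hr h1 h2
  · letI : Fintype (PERM.Lc n) := Fintype.ofFinite _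
    letI : Finite ((PERM.Lc n)ᵒᵈ) := inferInstanceAs (Finite (PERM.Lc n))
    letI : Fintype ((PERM.Lc n)ᵒᵈ) := Fintype.ofFinite _
    letI : Nonempty (PERM.Lc n) := ⟨⊥⟩
    refine ⟨FLP.FL (PERM.Lc n), inferInstance, Set.range FLP.gen, FLP.isFree _, ?_⟩
    set v : PERM.Lc n → PERM.Lc n := fun i => i with hv
    have hval : Function.Surjective v := fun a => ⟨a, rfl⟩
    have hvald : Function.Surjective (fun i => OrderDual.toDual (v i) :
        PERM.Lc n → (PERM.Lc n)ᵒᵈ) := fun a => ⟨OrderDual.ofDual a, rfl⟩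
    have hwfL : WellFounded (ABS.rD (L := PERM.Lc n)) := ABS.rD_wf (GLUE.habs_trans n)
    have hwfD : WellFounded (ABS.rD (L := (PERM.Lc n)ᵒᵈ)) := ABS.rD_wf (GLUE.habs_transD n)
    refine ⟨fun z => (FLP.evalHom v z).val, fun z => (FLP.evalHom v z).2, ?_, ?_, ?_⟩
    · intro x hx
      exact ⟨FLP.gen ⟨x, hx⟩, rfl⟩
    · intro z w
      constructor
      · show (FLP.evalHom v (z ⊔ w)).val = _
        rw [map_sup]
        rfl
      · show (FLP.evalHom v (z ⊓ w)).val = _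
        rw [map_inf]
        rfl
    · intro x hx
      have hset : {z : FLP.FL (PERM.Lc n) | (FLP.evalHom v z).val = x}
          = {z | FLP.evalHom v z = (⟨x, hx⟩ : PERM.Lc n)} := by
        ext z
        exact ⟨fun h => Subtype.ext h, fun h => congrArg Subtype.val h⟩
      rw [hset]
      constructor
      · exact ⟨_, ABS.lower_bounded hwfL v hval ⟨x, hx⟩⟩
      · obtain ⟨hm1, hm2⟩ := ABS.lower_bounded (L := (PERM.Lc n)ᵒᵈ) hwfD
          (fun i => OrderDual.toDual (v i)) hvald
          (OrderDual.toDual (⟨x, hx⟩ : PERM.Lc n))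
        set m := ABS.bta hwfD (fun i => OrderDual.toDual (v i))
          (OrderDual.toDual (⟨x, hx⟩ : PERM.Lc n)) with hm
        refine ⟨FLP.fdual m, ?_, ?_⟩
        · have h5 := FLP.evalHom_fdual v m
          rw [hm1] at h5
          exact (OrderDual.toDual.injective h5).symm
        · intro z hz
          have h5 := FLP.evalHom_fdual v (FLP.fdual z)
          rw [FLP.fdual_fdual] at h5
          rw [hz] at h5
          have h6 := hm2 h5
          have h7 := FLP.fdual_le_fdual h6
          rwa [FLP.fdual_fdual] at h7
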